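/- For all integers r₀ and R with 1 ≤ r₀ ≤ R, one has ∑_{r=r₀}^{R} 1/√(r(r+1)) ≤ 2 · arcsinh(√(R + 1/2)) − 2 · arcsinh(√(r₀ − 1/2)). -/

import Mathlib

open Real

lemma two_mul_sub_div_le_log {x : ℝ} (hx : 1 ≤ x) :
    2 * (x - 1) / (x + 1) ≤ Real.log x := by
  set f : ℝ → ℝ := fun t => Real.log t - 2 * (t - 1) / (t + 1) with hf
  have hd : ∀ t : ℝ, 1 < t →
      HasDerivAt f (t⁻¹ - (2 * (t + 1) - 2 * (t - 1) * 1) / (t + 1) ^ 2) t := by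
    intro t ht1
    have ht0 : t ≠ 0 := by linarith
    have htne : t + 1 ≠ 0 := by linarith
    have h1 : HasDerivAt (fun t : ℝ => 2 * (t - 1)) 2 t := by
      simpa using (((hasDerivAt_id t).sub_const 1).const_mul 2)
    have h2 : HasDerivAt (fun t : ℝ => t + 1) 1 t := (hasDerivAt_id t).add_const 1
    exact (Real.hasDerivAt_log ht0).sub (h1.div h2 htne)
  have hmono : MonotoneOn f (Set.Ici (1:ℝ)) := by
    apply monotoneOn_of_deriv_nonneg (convex_Ici 1)
    · apply ContinuousOn.sub
      · exact Real.continuousOn_log.mono (by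
          intro t ht; simp only [Set.mem_Ici] at ht
          simp only [Set.mem_compl_iff, Set.mem_singleton_iff]
          intro h; rw [h] at ht; linarith)
      · apply ContinuousOn.div (by fun_prop) (by fun_prop)
        intro t ht; simp only [Set.mem_Ici] at ht; intro h; linarith
    · intro t ht
      rw [interior_Ici] at ht
      exact ((hd t ht).differentiableAt).differentiableWithinAt
    · intro t ht
      rw [interior_Ici] at ht
      rw [(hd t ht).deriv]
      have ht1 : (1:ℝ) < t := ht
      have ht0 : (0:ℝ) < t := by linarith
      rw [sub_nonneg, div_le_iff₀ (by positivity), inv_mul_eq_div, le_div_iff₀ (by positivity)]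
      nlinarith [sq_nonneg (t - 1)]
  have h := hmono (Set.self_mem_Ici) (Set.mem_Ici.2 hx) hx
  simp only [hf, Real.log_one] at h
  have h0 : (2:ℝ) * (1 - 1) / (1 + 1) = 0 := by norm_num
  linarith [h]

lemma le_of_sq_le_sq' {a b : ℝ} (ha : 0 ≤ a) (hb : 0 ≤ b) (h : a^2 ≤ b^2) : a ≤ b := by
  have h2 := Real.sqrt_le_sqrt h
  rwa [Real.sqrt_sq ha, Real.sqrt_sq hb] at h2

set_option maxHeartbeats 1000000 in
lemma key_term {x : ℝ} (hx : 1 ≤ x) :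
    1 / Real.sqrt (x * (x + 1)) ≤
      2 * Real.arsinh (Real.sqrt (x + 1/2)) - 2 * Real.arsinh (Real.sqrt (x - 1/2)) := by
  have hx0 : (0:ℝ) ≤ x := by linarith
  set u := Real.sqrt (x - 1/2) with hu
  set v := Real.sqrt (x + 1/2) with hv
  set w := Real.sqrt (x + 3/2) with hw
  set s := Real.sqrt (x * (x + 1)) with hs
  have hu0 : 0 ≤ u := Real.sqrt_nonneg _
  have hv0 : 0 < v := Real.sqrt_pos.2 (by linarith)
  have hw0 : 0 < w := Real.sqrt_pos.2 (by linarith)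
  have hs0 : 0 < s := Real.sqrt_pos.2 (by nlinarith)
  have hu2 : u ^ 2 = x - 1/2 := Real.sq_sqrt (by linarith)
  have hv2 : v ^ 2 = x + 1/2 := Real.sq_sqrt (by linarith)
  have hw2 : w ^ 2 = x + 3/2 := Real.sq_sqrt (by linarith)
  have hs2 : s ^ 2 = x ^ 2 + x := by rw [hs, Real.sq_sqrt (by nlinarith)]; ring
  have hwu : u < w := by
    rw [hu, hw]; exact Real.sqrt_lt_sqrt (by linarith) (by linarith)
  -- rewrite arsinh as logs
  have harv : Real.arsinh v = Real.log (v + w) := by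
    have h1 : 1 + v ^ 2 = x + 3/2 := by rw [hv2]; ring
    rw [Real.arsinh, h1, ← hw]
  have haru : Real.arsinh u = Real.log (u + v) := by
    have h1 : 1 + u ^ 2 = x + 1/2 := by rw [hu2]; ring
    rw [Real.arsinh, h1, ← hv]
  rw [harv, haru]
  clear_value u v w s
  clear hu hv hw hs harv haru
  -- auxiliary quantities
  set p := u * w with hp
  set q := v * (u + w) with hq
  have hp0 : 0 ≤ p := mul_nonneg hu0 hw0.le
  have hq0 : 0 ≤ q := mul_nonneg hv0.le (by linarith)
  have hp2 : p ^ 2 = x ^ 2 + x - 3/4 := by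
    rw [hp, mul_pow, hu2, hw2]; ring
  have hq2 : q ^ 2 = (x + 1/2) * (2*x + 1 + 2*p) := by
    rw [hq, hp, mul_pow, hv2]
    linear_combination (x + 1/2) * hu2 + (x + 1/2) * hw2
  have hprod : (u + 2*v + w) * (u + w) = 2*x + 1 + 2*p + 2*q := by
    rw [hp, hq]; linear_combination hu2 + hw2
  clear_value p q
  clear hp hq
  -- basic bounds on s and p
  have hps : p ≤ s := le_of_sq_le_sq' hp0 hs0.le (by linarith [hp2, hs2])
  have hsgex : x ≤ s := le_of_sq_le_sq' hx0 hs0.le (by linarith [hs2, hx0])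
  have hs1 : 1 ≤ s := le_trans hx hsgex
  have hsle : s ≤ x + 1/2 := le_of_sq_le_sq' hs0.le (by linarith)
    (by nlinarith [hs2])
  -- L ≥ 0
  have hL0 : 0 ≤ 8*s - (2*x+1) - 2*p := by linarith [hps, hsgex, hx]
  -- M ≥ 0
  have hM0 : 0 ≤ 64*s^2 - 4 - 16*s*(2*x+1) := by
    nlinarith [hs2, hsle, hx,
      mul_le_mul_of_nonneg_left hsle (show (0:ℝ) ≤ 16*(2*x+1) by linarith)]
  -- M ≥ 32 s p
  have hM : 32 * s * p ≤ 64 * s^2 - 4 - 16*s*(2*x+1) := by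
    have hN0 : (0:ℝ) ≤ 4096*x^4 + 8192*x^3 + 4608*x^2 + 512*x + 16 := by positivity
    have hNid : (64*s^2 - 4)^2 + 256*s^2*(2*x+1)^2 - 1024*s^2*p^2
        = 4096*x^4 + 8192*x^3 + 4608*x^2 + 512*x + 16 := by
      rw [hs2, hp2]; ring
    have hfinal : (32*s*(2*x+1)*(64*s^2-4))^2 ≤
        (4096*x^4 + 8192*x^3 + 4608*x^2 + 512*x + 16)^2 := by
      calc (32*s*(2*x+1)*(64*s^2-4))^2
          = 1024*s^2*(2*x+1)^2*(64*s^2-4)^2 := by ring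
        _ = 1024*(x^2+x)*(2*x+1)^2*(64*(x^2+x)-4)^2 := by rw [hs2]
        _ ≤ (4096*x^4 + 8192*x^3 + 4608*x^2 + 512*x + 16)^2 := by
            have hdiff : (4096*x^4 + 8192*x^3 + 4608*x^2 + 512*x + 16)^2
                - 1024*(x^2+x)*(2*x+1)^2*(64*(x^2+x)-4)^2
                = 2097152*x^6 + 6291456*x^5 + 7143424*x^4 + 3801088*x^3
                  + 851968*x^2 + 256 := by ring
            linarith [hdiff, pow_nonneg hx0 2, pow_nonneg hx0 3, pow_nonneg hx0 4,
              pow_nonneg hx0 5, pow_nonneg hx0 6]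
    have hK0 : (0:ℝ) < 32*s*(2*x+1)*(64*s^2-4) := by
      have h64 : (0:ℝ) < 64*s^2 - 4 := by nlinarith [hs1, hs0]
      have h2x : (0:ℝ) < 2*x+1 := by linarith
      positivity
    have hstep : 32*s*(2*x+1)*(64*s^2-4) ≤
        4096*x^4 + 8192*x^3 + 4608*x^2 + 512*x + 16 :=
      le_of_sq_le_sq' hK0.le hN0 hfinal
    have hMsq : (32*s*p)^2 ≤ (64*s^2 - 4 - 16*s*(2*x+1))^2 := by
      linarith [hstep, hNid]
    exact le_of_sq_le_sq' (by positivity) hM0 hMsq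
  -- L² ≥ 4q²
  have hid : (8*s - (2*x+1) - 2*p)^2 - 4*q^2
      = (64*s^2 - 4 - 16*s*(2*x+1)) - 32*s*p := by
    linear_combination 4*hp2 - 4*hq2
  have hB : 4 * q^2 ≤ (8*s - (2*x+1) - 2*p)^2 := by linarith [hM, hid]
  have hstar' : 2*q ≤ 8*s - (2*x+1) - 2*p :=
    le_of_sq_le_sq' (by linarith) hL0 (by linarith [hB])
  have hstar : 2*x + 1 + 2*p + 2*q ≤ 8*s := by linarith [hstar']
  -- combine
  have h8 : (u + 2*v + w) * (u + w) ≤ 8*s := by rw [hprod]; exact hstar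
  have hd2 : (w - u) * (w + u) = 2 := by linear_combination hw2 - hu2
  have hd2s : s * ((w - u) * (w + u)) = s * 2 := by rw [hd2]
  have huw : 0 < u + w := by linarith
  have h48 : 4*(w-u)*s*(u+w) = 8*s := by linear_combination 4*s*hd2
  have hfin : u + 2*v + w ≤ 4*(w-u)*s := by
    have hmul : (u + 2*v + w) * (u+w) ≤ (4*(w-u)*s) * (u+w) := by
      rw [show (4*(w-u)*s) * (u+w) = 4*(w-u)*s*(u+w) by ring, h48]
      exact h8
    exact le_of_mul_le_mul_right hmul huw
  have hratio : 1 / s ≤ 4 * (w - u) / (u + 2*v + w) := by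
    rw [div_le_div_iff₀ hs0 (by positivity)]
    linarith [hfin, hs0]
  have huv0 : 0 < u + v := by linarith
  have hrho : 1 ≤ (v + w) / (u + v) := by
    rw [le_div_iff₀ huv0]; linarith
  have hlog := two_mul_sub_div_le_log hrho
  rw [Real.log_div (by positivity) (by positivity)] at hlog
  have heq : 2 * ((v + w)/(u + v) - 1) / ((v + w)/(u + v) + 1) = 2 * (w - u) / (u + 2*v + w) := by
    field_simp
    ring
  rw [heq] at hlog
  calc 1 / s ≤ 4 * (w - u) / (u + 2*v + w) := hratio
    _ = 2 * (2 * (w - u) / (u + 2*v + w)) := by ring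
    _ ≤ 2 * (Real.log (v + w) - Real.log (u + v)) := by linarith
    _ = 2 * Real.log (v + w) - 2 * Real.log (u + v) := by ring

theorem sum_inv_sqrt_le_arsinh (r₀ R : ℤ) (h1 : 1 ≤ r₀) (h2 : r₀ ≤ R) :
    ∑ r ∈ Finset.Icc r₀ R, 1 / Real.sqrt ((r : ℝ) * ((r : ℝ) + 1)) ≤
      2 * Real.arsinh (Real.sqrt ((R : ℝ) + 1/2))
        - 2 * Real.arsinh (Real.sqrt ((r₀ : ℝ) - 1/2)) := by
  refine Int.le_induction (motive := fun n _ => ∑ r ∈ Finset.Icc r₀ n, 1 / Real.sqrt ((r : ℝ) * ((r : ℝ) + 1)) ≤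
      2 * Real.arsinh (Real.sqrt ((n : ℝ) + 1/2))
        - 2 * Real.arsinh (Real.sqrt ((r₀ : ℝ) - 1/2))) ?_ ?_ R h2
  · rw [Finset.Icc_self, Finset.sum_singleton]
    exact key_term (by exact_mod_cast h1)
  · intro n hn ih
    have hins : Finset.Icc r₀ (n + 1) = insert (n + 1) (Finset.Icc r₀ n) := by
      ext r; simp only [Finset.mem_Icc, Finset.mem_insert]; omega
    have hnm : (n + 1) ∉ Finset.Icc r₀ n := by simp only [Finset.mem_Icc]; omega
    rw [hins, Finset.sum_insert hnm]
    have hkey : 1 / Real.sqrt (((n:ℝ)+1) * (((n:ℝ)+1) + 1)) ≤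
        2 * Real.arsinh (Real.sqrt (((n:ℝ)+1) + 1/2))
          - 2 * Real.arsinh (Real.sqrt (((n:ℝ)+1) - 1/2)) := by
      apply key_term
      have : (1:ℝ) ≤ (n:ℝ) := by exact_mod_cast (h1.trans hn)
      linarith
    have e1 : ((n:ℝ)+1) - 1/2 = (n:ℝ) + 1/2 := by ring
    rw [e1] at hkey
    push_cast
    linarith [ih, hkey]
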